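/- Let $R = k[x,y]$ over a field $k$ and let $I, J$ be $(x,y)$-primary monomial ideals with $J = (x^{c_1}y^{d_1}, \ldots, x^{c_s}y^{d_s})$ in standard form (the $c_i$ strictly decreasing with $c_s = 0$, the $d_i$ strictly increasing with $d_1 = 0$), and suppose $\omega(I) \ge \omega(J)$. Then $\omega(IJ) \le \omega(I) + \max\{c_1, d_s\}$. -/

import Mathlib

open Ideal Finset MvPolynomial

/-- `I` is an `N`-absorbing ideal: whenever a product of `N+1` elements lies in `I`,
the product of some `N` of them (omitting one factor) lies in `I`. -/
def IsNAbsorbing {R : Type*} [CommRing R] (I : Ideal R) (N : ℕ) : Prop :=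
  ∀ x : Fin (N + 1) → R, (∏ i, x i) ∈ I →
    ∃ j, (∏ i ∈ Finset.univ.erase j, x i) ∈ I

/-- `ω(I)`: the least `N` such that `I` is `N`-absorbing. -/
noncomputable def omegaAbs {R : Type*} [CommRing R] (I : Ideal R) : ℕ :=
  sInf {N | IsNAbsorbing I N}

/-- Multiset version of the absorbing condition. -/
def MsAbs {R : Type*} [CommRing R] (K : Ideal R) (n : ℕ) : Prop :=
  ∀ s : Multiset R, Multiset.card s = n + 1 → s.prod ∈ K →
    ∃ t ≤ s, Multiset.card t = n ∧ t.prod ∈ K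

section MsAbsLemmas

variable {R : Type*} [CommRing R] {K : Ideal R} {n m : ℕ}

lemma isNAbsorbing_iff_msAbs : IsNAbsorbing K n ↔ MsAbs K n := by
  classical
  constructor
  · intro h s hcard hprod
    obtain ⟨l, rfl⟩ : ∃ l : List R, (l : Multiset R) = s := ⟨s.toList, s.coe_toList⟩
    have hl : l.length = n + 1 := by simpa using hcard
    set x : Fin (n + 1) → R := fun i => l.get (Fin.cast hl.symm i) with hx
    have huniv : (Finset.univ : Finset (Fin (n+1))).val.map x = (l : Multiset R) := by
      have hb : (Finset.univ : Finset (Fin (n+1))).val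
          = (Finset.univ : Finset (Fin l.length)).val.map (finCongr hl) := by
        have h0 := congrArg Finset.val (Finset.map_univ_equiv (finCongr hl))
        rw [Finset.map_val] at h0
        simpa using h0.symm
      rw [hb, Multiset.map_map]
      have hcomp : (x ∘ finCongr hl) = l.get := by
        funext i; simp [hx, Fin.cast]
      rw [hcomp, Fin.univ_def]
      show Multiset.map l.get (List.finRange l.length : List (Fin l.length)) = _
      rw [Multiset.map_coe, List.map_get_finRange]
    have hxprod : (∏ i, x i) = l.prod := by
      calc (∏ i, x i) = ∏ i : Fin l.length, l.get i := Fin.prod_congr' l.get hl.symm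
        _ = l.prod := by simpa using Fin.prod_univ_get l
    obtain ⟨j, hj⟩ := h x (by rwa [hxprod])
    refine ⟨(Finset.univ.erase j).val.map x, ?_, ?_, ?_⟩
    · calc (Finset.univ.erase j).val.map x ≤ (Finset.univ : Finset (Fin (n+1))).val.map x :=
            Multiset.map_le_map (Finset.val_le_iff.2 (Finset.erase_subset _ _))
        _ = l := huniv
    · simp [Finset.card_erase_of_mem]
    · rwa [← Finset.prod_eq_multiset_prod]
  · intro h x hprod
    set s : Multiset R := (Finset.univ : Finset (Fin (n+1))).val.map x with hs
    have hcard : Multiset.card s = n + 1 := by simp [hs]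
    have hsp : s.prod = ∏ i, x i := by rw [Finset.prod_eq_multiset_prod]
    obtain ⟨t, hts, htc, htp⟩ := h s hcard (by rwa [hsp])
    have hlt : t < s := lt_of_le_of_ne hts (by intro hh; rw [hh] at htc; omega)
    obtain ⟨a, hat⟩ := Multiset.lt_iff_cons_le.1 hlt
    have heq : a ::ₘ t = s := Multiset.eq_of_le_of_card_le hat (by simp [hcard, htc])
    have ha : a ∈ s := by rw [← heq]; exact Multiset.mem_cons_self _ _
    obtain ⟨j, _, rfl⟩ := Multiset.mem_map.1 ha
    refine ⟨j, ?_⟩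
    have hu : (Finset.univ : Finset (Fin (n+1))).val = j ::ₘ (Finset.univ.erase j).val := by
      rw [Finset.erase_val]
      exact (Multiset.cons_erase (show j ∈ (Finset.univ : Finset (Fin (n+1))).val by simp)).symm
    have hse : s = x j ::ₘ (Finset.univ.erase j).val.map x := by
      rw [hs, hu, Multiset.map_cons]
    rw [hse] at heq
    have ht' : t = (Finset.univ.erase j).val.map x := (Multiset.cons_inj_right _).1 heq
    rw [Finset.prod_eq_multiset_prod, ← ht']
    exact htp

lemma MsAbs.strong (h : MsAbs K n) :
    ∀ kk (s : Multiset R), Multiset.card s = n + 1 + kk → s.prod ∈ K →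
      ∃ t ≤ s, Multiset.card t = n ∧ t.prod ∈ K := by
  classical
  intro kk
  induction kk with
  | zero => exact fun s hc hp => h s hc hp
  | succ kk ih =>
    intro s hc hp
    have h2 : 2 ≤ Multiset.card s := by omega
    obtain ⟨a, ha⟩ := Multiset.card_pos_iff_exists_mem.1 (show 0 < Multiset.card s by omega)
    obtain ⟨s1, rfl⟩ := Multiset.exists_cons_of_mem ha
    have h1 : 0 < Multiset.card s1 := by simp at hc; omega
    obtain ⟨b, hb⟩ := Multiset.card_pos_iff_exists_mem.1 h1
    obtain ⟨u, rfl⟩ := Multiset.exists_cons_of_mem hb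
    have hprod : ((a*b) ::ₘ u).prod ∈ K := by
      simpa [mul_assoc, Multiset.prod_cons] using hp
    have hcard' : Multiset.card ((a*b) ::ₘ u) = n + 1 + kk := by simp at hc ⊢; omega
    obtain ⟨t, htu, htc, htp⟩ := ih ((a*b) ::ₘ u) hcard' hprod
    by_cases hab : (a*b) ∈ t
    · -- t = (a*b) ::ₘ t' with t' ≤ u
      have hn1 : 1 ≤ n := by
        rcases Nat.eq_zero_or_pos n with h0 | h; · subst h0; simp [Multiset.card_eq_zero] at htc; simp [htc] at hab
        · exact h
      have ht' : t.erase (a*b) ≤ u := Multiset.erase_le_iff_le_cons.2 htu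
      set t' := t.erase (a*b) with ht'def
      have htt : t = (a*b) ::ₘ t' := (Multiset.cons_erase hab).symm
      have ht2 : Multiset.card (a ::ₘ b ::ₘ t') = n + 1 := by
        rw [htt] at htc; simp at htc ⊢; omega
      have ht2p : (a ::ₘ b ::ₘ t').prod ∈ K := by
        have : (a ::ₘ b ::ₘ t').prod = t.prod := by rw [htt]; simp [Multiset.prod_cons, mul_assoc]
        rwa [this]
      obtain ⟨t3, h3le, h3c, h3p⟩ := h _ ht2 ht2p
      refine ⟨t3, le_trans h3le ?_, h3c, h3p⟩
      exact Multiset.cons_le_cons a (Multiset.cons_le_cons b ht')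
    · -- t ≤ u
      have htu' : t ≤ u := by
        rw [Multiset.le_iff_count] at htu ⊢
        intro w
        rcases eq_or_ne w (a*b) with rfl | hw
        · simp [Multiset.count_eq_zero_of_notMem hab]
        · have := htu w; rwa [Multiset.count_cons_of_ne hw] at this
      exact ⟨t, le_trans htu' (le_trans (Multiset.le_cons_self _ _) (Multiset.le_cons_self _ _)), htc, htp⟩

lemma MsAbs.mono (h : MsAbs K n) (hnm : n ≤ m) : MsAbs K m := by
  intro s hc hp
  obtain ⟨t, hts, htc, htp⟩ := h.strong (m - n) s (by omega) hp
  -- t has card n; need card m sub-multiset of s containing t with product in K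
  obtain ⟨u, hu⟩ := Multiset.le_iff_exists_add.1 hts
  -- take t + (first m - n elements of u)
  obtain ⟨v, hvu, hvc⟩ : ∃ v ≤ u, Multiset.card v = m - n := by
    have hmu : m - n ≤ Multiset.card u := by subst hu; simp at hc; omega
    refine ⟨↑(u.toList.take (m - n)), ?_, ?_⟩
    · calc (↑(u.toList.take (m - n)) : Multiset R) ≤ ↑u.toList :=
        (List.take_sublist _ _).subperm
      _ = u := u.coe_toList
    · simp; omega
  refine ⟨t + v, ?_, by simp [htc, hvc]; omega, ?_⟩
  · rw [hu]; exact add_le_add (le_refl t) hvu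
  · rw [Multiset.prod_add]; exact Ideal.mul_mem_right _ _ htp


lemma isNAbsorbing_mono (h : IsNAbsorbing K n) (hnm : n ≤ m) : IsNAbsorbing K m := by
  rw [isNAbsorbing_iff_msAbs] at h ⊢
  exact h.mono hnm

end MsAbsLemmas

section TwoVars

variable {k : Type*} [Field k]

local notation "R2" => MvPolynomial (Fin 2) k

/-- exponent vector (p,q) -/
noncomputable def ee (p q : ℕ) : Fin 2 →₀ ℕ := Finsupp.single 0 p + Finsupp.single 1 q

lemma ee_apply0 (p q : ℕ) : ee p q 0 = p := by
  simp [ee, Finsupp.single_apply]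

lemma ee_apply1 (p q : ℕ) : ee p q 1 = q := by
  simp [ee, Finsupp.single_apply]

lemma ee_add (p q p' q' : ℕ) : ee p q + ee p' q' = ee (p + p') (q + q') := by
  simp only [ee, Finsupp.single_add]
  abel

lemma ee_inj {p q p' q' : ℕ} (h : ee p q = ee p' q') : p = p' ∧ q = q' := by
  constructor
  · have := congrArg (fun f : Fin 2 →₀ ℕ => f 0) h; simpa [ee_apply0] using this
  · have := congrArg (fun f : Fin 2 →₀ ℕ => f 1) h; simpa [ee_apply1] using this

lemma ee_le_iff {p q p' q' : ℕ} : ee p q ≤ ee p' q' ↔ p ≤ p' ∧ q ≤ q' := by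
  constructor
  · intro h
    exact ⟨by simpa [ee_apply0] using h 0, by simpa [ee_apply1] using h 1⟩
  · intro ⟨h1, h2⟩ i
    fin_cases i
    · simpa [ee_apply0] using h1
    · simpa [ee_apply1] using h2

lemma X_eq_mon (i : Fin 2) : (X i : R2) = monomial (Finsupp.single i 1) 1 := by
  rw [← pow_one (X i : R2), X_pow_eq_monomial]

lemma ee_single0 (p q : ℕ) : ee p q + Finsupp.single 0 1 = ee (p+1) q := by
  simp only [ee, Finsupp.single_add]
  abel

lemma ee_single1 (p q : ℕ) : ee p q + Finsupp.single 1 1 = ee p (q+1) := by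
  simp only [ee, Finsupp.single_add]
  abel

lemma Xpq (p q : ℕ) : (X 0 : R2) ^ p * X 1 ^ q = monomial (ee p q) 1 := by
  rw [X_pow_eq_monomial, X_pow_eq_monomial, monomial_mul, one_mul]; rfl

/-- degree-(p,q) monomial decomposition of exponents -/
lemma exists_ee (u : Fin 2 →₀ ℕ) : u = ee (u 0) (u 1) := by
  ext i; fin_cases i
  · simp [ee_apply0]
  · simp [ee_apply1]

noncomputable def mSpan (T : Set (Fin 2 →₀ ℕ)) : Ideal R2 :=
  Ideal.span ((fun e => monomial e (1 : k)) '' T)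

lemma mem_mSpan_iff {T : Set (Fin 2 →₀ ℕ)} {f : R2} :
    f ∈ mSpan T ↔ ∀ u ∈ f.support, ∃ e ∈ T, e ≤ u :=
  mem_ideal_span_monomial_image

lemma monomial_mem_mSpan {T : Set (Fin 2 →₀ ℕ)} {u : Fin 2 →₀ ℕ}
    (h : ∃ e ∈ T, e ≤ u) : (monomial u (1:k)) ∈ mSpan T := by
  classical
  rw [mem_mSpan_iff]
  intro v hv
  rw [support_monomial, if_neg (one_ne_zero : (1:k) ≠ 0), Finset.mem_singleton] at hv
  subst hv; exact h

/-- dividing out a factor with non-zero constant term from a monomial ideal -/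
lemma mem_mSpan_of_mul {T : Set (Fin 2 →₀ ℕ)} {a b : R2}
    (hb : coeff 0 b ≠ 0) (hab : a * b ∈ mSpan T) : a ∈ mSpan T := by
  classical
  rw [mem_mSpan_iff] at hab ⊢
  by_contra hcon
  push_neg at hcon
  obtain ⟨u₀, hu₀s, hu₀⟩ := hcon
  -- bad exponents
  set B : Finset (Fin 2 →₀ ℕ) := a.support.filter (fun u => ¬ ∃ e ∈ T, e ≤ u) with hB
  have hBne : B.Nonempty := ⟨u₀, by
    rw [hB, Finset.mem_filter]
    exact ⟨hu₀s, by rintro ⟨e, he, hle⟩; exact hu₀ e he hle⟩⟩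
  obtain ⟨u, huB, humin⟩ := B.exists_min_image (fun u => u 0 + u 1) hBne
  rw [hB, Finset.mem_filter] at huB
  obtain ⟨hus, hubad⟩ := huB
  -- coefficient of u in a * b is zero
  have hu_not : u ∉ (a * b).support := by
    intro hmem
    exact hubad (hab u hmem)
  have hcoeff : coeff u (a * b) = 0 := by
    by_contra hne; exact hu_not (mem_support_iff.2 hne)
  rw [MvPolynomial.coeff_mul] at hcoeff
  have hsingle : ∀ x ∈ Finset.HasAntidiagonal.antidiagonal u, x ≠ (u, 0) → coeff x.1 a * coeff x.2 b = 0 := by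
    rintro ⟨v, w⟩ hxw hne
    rw [Finset.HasAntidiagonal.mem_antidiagonal] at hxw
    have hw : w ≠ 0 := by
      rintro rfl
      simp only [add_zero] at hxw
      exact hne (by rw [hxw])
    by_cases hva : coeff v a = 0
    · rw [hva, zero_mul]
    · exfalso
      have hvs : v ∈ a.support := mem_support_iff.2 hva
      have hvu : v ≤ u := by rw [← hxw]; exact le_self_add
      by_cases hgood : ∃ e ∈ T, e ≤ v
      · obtain ⟨e, heT, hev⟩ := hgood
        exact hubad ⟨e, heT, le_trans hev hvu⟩
      · have hvB : v ∈ B := by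
          rw [hB, Finset.mem_filter]; exact ⟨hvs, hgood⟩
        have := humin v hvB
        -- but deg v < deg u
        have hwne : w 0 + w 1 ≠ 0 := by
          intro h0
          apply hw
          have h00 : w 0 = 0 := by omega
          have h11 : w 1 = 0 := by omega
          ext i
          simp only [Finsupp.coe_zero, Pi.zero_apply]
          fin_cases i
          · exact h00
          · exact h11
        have hvlt : v 0 + v 1 < u 0 + u 1 := by
          have h0 := congrArg (fun f : Fin 2 →₀ ℕ => f 0) hxw
          have h1 := congrArg (fun f : Fin 2 →₀ ℕ => f 1) hxw
          simp only [Finsupp.add_apply] at h0 h1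
          omega
        omega
  have hsum : (∑ x ∈ Finset.HasAntidiagonal.antidiagonal u, coeff x.1 a * coeff x.2 b)
      = coeff u a * coeff 0 b :=
    Finset.sum_eq_single (u, 0) hsingle
      (fun h => absurd (by rw [Finset.HasAntidiagonal.mem_antidiagonal]; simp) h)
  rcases mul_eq_zero.1 (hsum.symm.trans hcoeff) with h | h
  · exact (mem_support_iff.1 hus) h
  · exact hb h

noncomputable def Mxy : Ideal R2 := Ideal.span {(X 0 : R2), X 1}

lemma X0_mem_Mxy : (X 0 : R2) ∈ Mxy := Ideal.subset_span (by left; rfl)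
lemma X1_mem_Mxy : (X 1 : R2) ∈ Mxy := Ideal.subset_span (by right; rfl)

lemma Mxy_eq_span_X_image : (Mxy : Ideal R2) = Ideal.span (X '' Set.univ) := by
  unfold Mxy
  congr 1
  ext g
  constructor
  · rintro (rfl | rfl)
    · exact ⟨0, trivial, rfl⟩
    · exact ⟨1, trivial, rfl⟩
  · rintro ⟨i, -, rfl⟩
    fin_cases i
    · left; rfl
    · right; rfl

lemma coeff_zero_ne_of_not_mem_Mxy {f : R2} (hf : f ∉ Mxy) : coeff 0 f ≠ 0 := by
  rw [Mxy_eq_span_X_image, mem_ideal_span_X_image] at hf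
  push_neg at hf
  obtain ⟨u, hus, hu⟩ := hf
  have : u = 0 := by
    ext i
    simp only [Finsupp.coe_zero, Pi.zero_apply]
    exact hu i trivial
  rw [← this]
  exact mem_support_iff.1 hus

lemma prod_mem_pow_card {ι : Type*} (s : Finset ι) (f : ι → R2)
    (h : ∀ i ∈ s, f i ∈ Mxy) : (∏ i ∈ s, f i) ∈ Mxy ^ s.card := by
  classical
  induction s using Finset.cons_induction with
  | empty => simp
  | cons a s ha ih =>
    rw [Finset.prod_cons, Finset.card_cons, pow_succ, mul_comm (Mxy ^ s.card) Mxy]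
    exact Ideal.mul_mem_mul (h a (Finset.mem_cons_self a s))
      (ih fun i hi => h i (Finset.mem_cons_of_mem hi))

/-- M^n is the span of the monomials of degree n -/
lemma Mxy_pow (n : ℕ) :
    (Mxy : Ideal R2) ^ n
      = Ideal.span {f : R2 | ∃ p q, p + q = n ∧ f = monomial (ee p q) 1} := by
  induction n with
  | zero =>
    simp only [pow_zero, Ideal.one_eq_top]
    symm
    rw [Ideal.eq_top_iff_one]
    apply Ideal.subset_span
    exact ⟨0, 0, rfl, by simp [ee]⟩
  | succ n ih =>
    rw [pow_succ, ih]
    unfold Mxy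
    rw [Ideal.span_mul_span']
    congr 1
    ext g
    constructor
    · rintro ⟨f1, ⟨p, q, hpq, rfl⟩, f2, hf2, rfl⟩
      rcases hf2 with rfl | rfl
      · exact ⟨p + 1, q, by omega, by
          beta_reduce
          rw [X_eq_mon, monomial_mul, mul_one, ee_single0]⟩
      · exact ⟨p, q + 1, by omega, by
          beta_reduce
          rw [X_eq_mon, monomial_mul, mul_one, ee_single1]⟩
    · rintro ⟨p, q, hpq, rfl⟩
      rcases Nat.eq_zero_or_pos p with rfl | hp
      · refine ⟨monomial (ee 0 (q-1)) 1, ⟨0, q-1, by omega, rfl⟩, X 1, Or.inr rfl, ?_⟩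
        beta_reduce
        rw [X_eq_mon, monomial_mul, mul_one, ee_single1]
        have hq : q - 1 + 1 = q := by omega
        rw [hq]
      · refine ⟨monomial (ee (p-1) q) 1, ⟨p-1, q, by omega, rfl⟩, X 0, Or.inl rfl, ?_⟩
        beta_reduce
        rw [X_eq_mon, monomial_mul, mul_one, ee_single0]
        have hp' : p - 1 + 1 = p := by omega
        rw [hp']

lemma Mxy_pow_le {K : Ideal R2} {n : ℕ}
    (h : ∀ p q, p + q = n → monomial (ee p q) (1:k) ∈ K) : Mxy ^ n ≤ K := by
  rw [Mxy_pow, Ideal.span_le]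
  rintro g ⟨p, q, hpq, rfl⟩
  exact h p q hpq

lemma monomial_mem_Mxy_pow {p q n : ℕ} (h : n ≤ p + q) :
    monomial (ee p q) (1:k) ∈ (Mxy : Ideal R2) ^ n := by
  have h1 : monomial (ee p q) (1:k) ∈ (Mxy : Ideal R2) ^ (p + q) := by
    rw [Mxy_pow]; exact Ideal.subset_span ⟨p, q, rfl, rfl⟩
  exact Ideal.pow_le_pow_right h h1

lemma ub {T : Set (Fin 2 →₀ ℕ)} {K : Ideal R2} (hK : K = mSpan T) {n : ℕ}
    (hpow : Mxy ^ n ≤ K) : IsNAbsorbing K n := by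
  intro x hx
  by_cases hall : ∀ i, x i ∈ Mxy
  · refine ⟨0, ?_⟩
    have hcard : (Finset.univ.erase (0 : Fin (n+1))).card = n := by simp
    have h2 := prod_mem_pow_card (Finset.univ.erase 0) x (fun i _ => hall i)
    rw [hcard] at h2
    exact hpow h2
  · push_neg at hall
    obtain ⟨i, hi⟩ := hall
    refine ⟨i, ?_⟩
    have hmul : (∏ j ∈ Finset.univ.erase i, x j) * x i ∈ K := by
      rw [Finset.prod_erase_mul _ _ (Finset.mem_univ i)]; exact hx
    rw [hK] at hmul ⊢
    exact mem_mSpan_of_mul (coeff_zero_ne_of_not_mem_Mxy hi) hmul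

lemma lb {T : Set (Fin 2 →₀ ℕ)} {K : Ideal R2} (hK : K = mSpan T) {p q : ℕ}
    (h0 : monomial (ee p q) (1:k) ∉ K)
    (h1 : monomial (ee (p+1) q) (1:k) ∈ K)
    (h2 : monomial (ee p (q+1)) (1:k) ∈ K) : ¬ MsAbs K (p+q) := by
  classical
  intro h
  set z : R2 := X 0 + X 1 with hzdef
  have hxy : (X 0 : R2) ≠ X 1 := X_injective.ne (by decide)
  have hz0 : z ≠ X 0 := by
    rw [hzdef]; intro hh; exact X_ne_zero 1 (add_eq_left.mp hh)
  have hz1 : z ≠ X 1 := by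
    rw [hzdef]; intro hh; exact X_ne_zero 0 (add_eq_right.mp hh)
  set s : Multiset R2 := Multiset.replicate p (X 0) + Multiset.replicate q (X 1) + {z}
    with hsdef
  have hscard : Multiset.card s = p + q + 1 := by simp [hsdef]
  have hsprod : s.prod ∈ K := by
    have : s.prod = monomial (ee (p+1) q) (1:k) + monomial (ee p (q+1)) (1:k) := by
      rw [hsdef]
      simp only [Multiset.prod_add, Multiset.prod_replicate, Multiset.prod_singleton]
      rw [hzdef, ← Xpq (p+1) q, ← Xpq p (q+1)]
      ring
    rw [this]
    exact Ideal.add_mem _ h1 h2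
  obtain ⟨t, hts, htc, htp⟩ := h s hscard hsprod
  set a := t.count (X 0) with hadef
  set b := t.count (X 1) with hbdef
  set cc := t.count z with hcdef
  have hcount : ∀ w, s.count w
      = ((if X 0 = w then p else 0) + (if X 1 = w then q else 0))
        + (if w = z then 1 else 0) := by
    intro w
    rw [hsdef, Multiset.count_add, Multiset.count_add, Multiset.count_replicate,
      Multiset.count_replicate, Multiset.count_singleton]
  have hcount0 : s.count (X 0) = p := by
    rw [hcount, if_pos rfl, if_neg (fun hh => hxy hh.symm), if_neg (fun hh => hz0 hh.symm)]
    omega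
  have hcount1 : s.count (X 1) = q := by
    rw [hcount, if_pos rfl, if_neg hxy, if_neg (fun hh => hz1 hh.symm)]
    omega
  have hcountz : s.count z = 1 := by
    rw [hcount, if_pos rfl, if_neg (fun hh => hz0 hh.symm), if_neg (fun hh => hz1 hh.symm)]
  have hap : a ≤ p := by rw [hadef, ← hcount0]; exact Multiset.count_le_of_le _ hts
  have hbq : b ≤ q := by rw [hbdef, ← hcount1]; exact Multiset.count_le_of_le _ hts
  have hc1 : cc ≤ 1 := by rw [hcdef, ← hcountz]; exact Multiset.count_le_of_le _ hts
  have hcount' : ∀ w, (Multiset.replicate a (X 0) + Multiset.replicate b (X 1)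
      + Multiset.replicate cc z).count w
      = ((if X 0 = w then a else 0) + (if X 1 = w then b else 0))
        + (if z = w then cc else 0) := by
    intro w
    rw [Multiset.count_add, Multiset.count_add, Multiset.count_replicate,
      Multiset.count_replicate, Multiset.count_replicate]
  have ht_eq : t = Multiset.replicate a (X 0) + Multiset.replicate b (X 1)
      + Multiset.replicate cc z := by
    apply Multiset.ext.2
    intro w
    rw [hcount']
    by_cases hw0 : w = X 0
    · subst hw0
      rw [if_pos rfl, if_neg (fun hh => hxy hh.symm), if_neg hz0, ← hadef]
      simp
    · by_cases hw1 : w = X 1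
      · subst hw1
        rw [if_pos rfl, if_neg hxy, if_neg hz1, ← hbdef]
        simp
      · by_cases hwz : w = z
        · subst hwz
          rw [if_pos rfl, if_neg (fun hh => hw0 hh.symm), if_neg (fun hh => hw1 hh.symm),
            ← hcdef]
          simp
        · have hw_s : s.count w = 0 := by
            rw [hcount, if_neg (fun hh => hw0 hh.symm), if_neg (fun hh => hw1 hh.symm),
              if_neg hwz]
          have hwt : t.count w = 0 := Nat.le_zero.1 (hw_s ▸ Multiset.count_le_of_le _ hts)
          rw [hwt, if_neg (fun hh => hw0 hh.symm), if_neg (fun hh => hw1 hh.symm),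
            if_neg (fun hh => hwz hh.symm)]
  have htcard : a + b + cc = p + q := by
    rw [ht_eq] at htc; simpa using htc
  have htprod : t.prod = X 0 ^ a * X 1 ^ b * z ^ cc := by
    rw [ht_eq]
    simp [Multiset.prod_add, Multiset.prod_replicate]
  -- auxiliary: from sum of two monomials in K with one exponent = ee p q, contradiction
  have haux : ∀ u : Fin 2 →₀ ℕ, u ≠ ee p q →
      monomial u (1:k) + monomial (ee p q) (1:k) ∉ K := by
    intro u hu hmem
    rw [hK, mem_mSpan_iff] at hmem
    have hsupp : ee p q ∈ (monomial u (1:k) + monomial (ee p q) (1:k)).support := by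
      rw [mem_support_iff, coeff_add, coeff_monomial, coeff_monomial,
        if_neg hu, if_pos rfl]
      simp
    obtain ⟨e, heT, hle⟩ := hmem _ hsupp
    exact h0 (hK ▸ monomial_mem_mSpan ⟨e, heT, hle⟩)
  interval_cases cc
  · -- cc = 0 : t.prod = x^p y^q ∈ K, contradiction
    have hab : a = p ∧ b = q := by omega
    obtain ⟨rfl, rfl⟩ := hab
    rw [htprod, pow_zero, mul_one, Xpq] at htp
    exact h0 htp
  · -- cc = 1
    have hcases : (a = p ∧ q = b + 1) ∨ (p = a + 1 ∧ b = q) := by omega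
    rcases hcases with ⟨rfl, hq⟩ | ⟨hp, rfl⟩
    · have : t.prod = monomial (ee (a+1) b) (1:k) + monomial (ee a (b+1)) (1:k) := by
        rw [htprod, pow_one, hzdef, ← Xpq (a+1) b, ← Xpq a (b+1)]; ring
      rw [this] at htp
      have hne : ee (a+1) b ≠ ee a q := fun hh => by have := (ee_inj hh).1; omega
      rw [show ee a (b+1) = ee a q by rw [hq]] at htp
      exact haux _ hne htp
    · have : t.prod = monomial (ee (a+1) b) (1:k) + monomial (ee a (b+1)) (1:k) := by
        rw [htprod, pow_one, hzdef, ← Xpq (a+1) b, ← Xpq a (b+1)]; ring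
      rw [this] at htp
      have hne : ee a (b+1) ≠ ee p b := fun hh => by have := (ee_inj hh).2; omega
      rw [show ee (a+1) b = ee p b by rw [hp]] at htp
      rw [add_comm] at htp
      exact haux _ hne htp

lemma mon_mem_of_le {K : Ideal R2} {p q p2 q2 : ℕ}
    (h : monomial (ee p q) (1:k) ∈ K) (hp : p ≤ p2) (hq : q ≤ q2) :
    monomial (ee p2 q2) (1:k) ∈ K := by
  have heq : monomial (ee p2 q2) (1:k) = monomial (ee (p2-p) (q2-q)) 1 * monomial (ee p q) 1 := by
    rw [monomial_mul, one_mul, ee_add]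
    have e1 : p2 - p + p = p2 := by omega
    have e2 : q2 - q + q = q2 := by omega
    rw [e1, e2]
  rw [heq]
  exact Ideal.mul_mem_left _ _ h

lemma corner {K : Ideal R2} {p q A B : ℕ}
    (hA : monomial (ee A 0) (1:k) ∈ K) (hB : monomial (ee 0 B) (1:k) ∈ K)
    (h0 : monomial (ee p q) (1:k) ∉ K) :
    ∃ p' q', p ≤ p' ∧ q ≤ q' ∧ monomial (ee p' q') (1:k) ∉ K ∧
      monomial (ee (p'+1) q') (1:k) ∈ K ∧ monomial (ee p' (q'+1)) (1:k) ∈ K := by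
  classical
  have hex1 : ∃ j, monomial (ee (p+j) q) (1:k) ∈ K :=
    ⟨A, mon_mem_of_le hA (by omega) (by omega)⟩
  set j₀ := Nat.find hex1 with hj₀def
  have hj₀ : monomial (ee (p+j₀) q) (1:k) ∈ K := Nat.find_spec hex1
  have hj₀pos : 0 < j₀ := by
    rcases Nat.eq_zero_or_pos j₀ with h | h
    · exfalso; apply h0; have := hj₀; rwa [h, add_zero] at this
    · exact h
  set p' := p + j₀ - 1 with hp'def
  have hp'not : monomial (ee p' q) (1:k) ∉ K := by
    have := Nat.find_min hex1 (show j₀ - 1 < j₀ by omega)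
    have heq : p + (j₀ - 1) = p' := by omega
    rwa [heq] at this
  have hp'succ : monomial (ee (p'+1) q) (1:k) ∈ K := by
    have heq : p' + 1 = p + j₀ := by omega
    rwa [heq]
  have hex2 : ∃ j, monomial (ee p' (q+j)) (1:k) ∈ K :=
    ⟨B, mon_mem_of_le hB (by omega) (by omega)⟩
  set j₁ := Nat.find hex2 with hj₁def
  have hj₁ : monomial (ee p' (q+j₁)) (1:k) ∈ K := Nat.find_spec hex2
  have hj₁pos : 0 < j₁ := by
    rcases Nat.eq_zero_or_pos j₁ with h | h
    · exfalso; apply hp'not; have := hj₁; rwa [h, add_zero] at this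
    · exact h
  set q' := q + j₁ - 1 with hq'def
  have hq'not : monomial (ee p' q') (1:k) ∉ K := by
    have := Nat.find_min hex2 (show j₁ - 1 < j₁ by omega)
    have heq : q + (j₁ - 1) = q' := by omega
    rwa [heq] at this
  refine ⟨p', q', by omega, by omega, hq'not, ?_, ?_⟩
  · exact mon_mem_of_le hp'succ (le_refl _) (by omega)
  · have heq : q' + 1 = q + j₁ := by omega
    rwa [heq]


lemma ee_A0 (A : ℕ) : ee A 0 = Finsupp.single 0 A := by
  simp [ee]

lemma ee_0B (B : ℕ) : ee 0 B = Finsupp.single 1 B := by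
  simp [ee]

lemma mon_mem_mSpan_iff {T : Set (Fin 2 →₀ ℕ)} {u : Fin 2 →₀ ℕ} :
    (monomial u (1:k)) ∈ mSpan T ↔ ∃ e ∈ T, e ≤ u := by
  classical
  constructor
  · intro h
    refine mem_mSpan_iff.1 h u ?_
    rw [support_monomial, if_neg (one_ne_zero : (1:k) ≠ 0)]
    exact Finset.mem_singleton_self u
  · exact monomial_mem_mSpan

end TwoVars


theorem omega_mul_le_two_vars {k : Type*} [Field k] (s : ℕ) (c d : Fin (s + 1) → ℕ)
    (hc : StrictAnti c) (hd : StrictMono d) (hcs : c (Fin.last s) = 0) (hd0 : d 0 = 0)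
    (I J : Ideal (MvPolynomial (Fin 2) k))
    (hIp : I.IsPrimary)
    (hIr : I.radical = Ideal.span {(X 0 : MvPolynomial (Fin 2) k), X 1})
    (hImono : ∃ S : Set (MvPolynomial (Fin 2) k),
      (∀ g ∈ S, ∃ e : Fin 2 →₀ ℕ, g = monomial e 1) ∧ I = Ideal.span S)
    (hJ : J = Ideal.span (Set.range fun i =>
      (X 0 : MvPolynomial (Fin 2) k) ^ c i * (X 1 : MvPolynomial (Fin 2) k) ^ d i))
    (hw : omegaAbs J ≤ omegaAbs I) :
    omegaAbs (I * J) ≤ omegaAbs I + max (c 0) (d (Fin.last s)) := by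
  classical
  -- monomial presentations
  obtain ⟨S, hSmono, hIS⟩ := hImono
  set TI : Set (Fin 2 →₀ ℕ) := {e | monomial e (1:k) ∈ S} with hTI
  have hI : I = mSpan TI := by
    rw [hIS]; unfold mSpan; congr 1
    ext g
    constructor
    · intro hg
      obtain ⟨e, rfl⟩ := hSmono g hg
      exact ⟨e, hg, rfl⟩
    · rintro ⟨e, he, rfl⟩; exact he
  set TJ : Set (Fin 2 →₀ ℕ) := Set.range (fun i => ee (c i) (d i)) with hTJ
  have hJ' : J = mSpan TJ := by
    rw [hJ]; unfold mSpan
    congr 1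
    have h1 : (fun i => (X 0 : MvPolynomial (Fin 2) k) ^ c i * (X 1 : MvPolynomial (Fin 2) k) ^ d i)
        = fun i => monomial (ee (c i) (d i)) (1:k) := funext fun i => Xpq _ _
    rw [h1,
      show (fun i => monomial (ee (c i) (d i)) (1:k))
        = (fun e => monomial e (1:k)) ∘ (fun i => ee (c i) (d i)) from rfl,
      Set.range_comp]
  set TIJ : Set (Fin 2 →₀ ℕ) := Set.image2 (· + ·) TI TJ with hTIJ
  have hIJ : I * J = mSpan TIJ := by
    rw [hI, hJ']; unfold mSpan
    rw [Ideal.span_mul_span']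
    congr 1
    ext g
    constructor
    · rintro ⟨f1, ⟨e1, he1, rfl⟩, f2, ⟨e2, he2, rfl⟩, rfl⟩
      beta_reduce
      exact ⟨e1 + e2, Set.mem_image2_of_mem he1 he2, by rw [monomial_mul, one_mul]⟩
    · rintro ⟨u, hu, rfl⟩
      obtain ⟨e1, he1, e2, he2, rfl⟩ := hu
      exact ⟨monomial e1 1, ⟨e1, he1, rfl⟩, monomial e2 1, ⟨e2, he2, rfl⟩,
        by beta_reduce; rw [monomial_mul, one_mul]⟩
  -- powers of the variables inside I
  have hIrM : I.radical = Mxy := hIr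
  obtain ⟨A, hA⟩ : ∃ n, (X 0 : MvPolynomial (Fin 2) k) ^ n ∈ I :=
    Ideal.mem_radical_iff.1 (hIrM ▸ X0_mem_Mxy)
  obtain ⟨B, hB⟩ : ∃ n, (X 1 : MvPolynomial (Fin 2) k) ^ n ∈ I :=
    Ideal.mem_radical_iff.1 (hIrM ▸ X1_mem_Mxy)
  have monA : monomial (ee A 0) (1:k) ∈ I := by
    rw [ee_A0, ← X_pow_eq_monomial]; exact hA
  have monB : monomial (ee 0 B) (1:k) ∈ I := by
    rw [ee_0B, ← X_pow_eq_monomial]; exact hB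
  -- I is omegaAbs I - absorbing
  have hneI : {n | IsNAbsorbing I n}.Nonempty := by
    refine ⟨A + B, ub hI (Mxy_pow_le fun p q hpq => ?_)⟩
    by_cases hpA : A ≤ p
    · exact mon_mem_of_le monA hpA (by omega)
    · exact mon_mem_of_le monB (by omega) (by omega)
  have ht_abs : IsNAbsorbing I (omegaAbs I) := Nat.sInf_mem hneI
  -- generators of J
  have monJ0 : monomial (ee (c 0) 0) (1:k) ∈ J := by
    rw [hJ']
    refine monomial_mem_mSpan ⟨ee (c 0) (d 0), ⟨0, rfl⟩, ?_⟩
    rw [hd0]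
  have monJs : monomial (ee 0 (d (Fin.last s))) (1:k) ∈ J := by
    rw [hJ']
    refine monomial_mem_mSpan ⟨ee (c (Fin.last s)) (d (Fin.last s)), ⟨Fin.last s, rfl⟩, ?_⟩
    rw [hcs]
  have hneJ : {n | IsNAbsorbing J n}.Nonempty := by
    refine ⟨c 0 + d (Fin.last s), ub hJ' (Mxy_pow_le fun p q hpq => ?_)⟩
    by_cases hpc : c 0 ≤ p
    · exact mon_mem_of_le monJ0 hpc (by omega)
    · exact mon_mem_of_le monJs (by omega) (by omega)
  have hu_abs : IsNAbsorbing J (omegaAbs J) := Nat.sInf_mem hneJ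
  -- L1 : Mxy ^ omegaAbs I ≤ I
  have hMt : Mxy ^ (omegaAbs I) ≤ I := by
    apply Mxy_pow_le
    intro p q hpq
    by_contra h0
    obtain ⟨p', q', hpp, hqq, hw0, hw1, hw2⟩ := corner monA monB h0
    have habs : IsNAbsorbing I (p' + q') := isNAbsorbing_mono ht_abs (by omega)
    exact lb hI hw0 hw1 hw2 (isNAbsorbing_iff_msAbs.1 habs)
  -- L2 : d (last) ≤ omegaAbs I
  have hds : d (Fin.last s) ≤ omegaAbs I := by
    rcases Nat.eq_zero_or_pos s with hs0 | hs
    · subst hs0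
      have : Fin.last 0 = 0 := rfl
      rw [this, hd0]
      omega
    · set i₀ : Fin (s+1) := ⟨s-1, by omega⟩ with hi₀def
      have hi₀last : i₀ < Fin.last s := by
        rw [Fin.lt_def]; simp [hi₀def]; omega
      have hc₀pos : 0 < c i₀ := by
        have := hc hi₀last; rwa [hcs] at this
      have hdpos : 0 < d (Fin.last s) := by
        have h00 : (0 : Fin (s+1)) < Fin.last s := by
          rw [Fin.lt_def]; simp; omega
        have := hd h00; rwa [hd0] at this
      have w0 : monomial (ee (c i₀ - 1) (d (Fin.last s) - 1)) (1:k) ∉ J := by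
        intro hmem
        rw [hJ'] at hmem
        obtain ⟨e, ⟨i, rfl⟩, hle⟩ := mon_mem_mSpan_iff.1 hmem
        obtain ⟨hle1, hle2⟩ := ee_le_iff.1 hle
        have hii : i₀ < i := hc.lt_iff_gt.1 (by omega)
        have hil : i < Fin.last s := hd.lt_iff_lt.1 (by omega)
        rw [Fin.lt_def] at hii hil
        simp [hi₀def] at hii
        simp [Fin.last] at hil
        omega
      have w1 : monomial (ee (c i₀ - 1 + 1) (d (Fin.last s) - 1)) (1:k) ∈ J := by
        have he : c i₀ - 1 + 1 = c i₀ := by omega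
        rw [he, hJ']
        exact monomial_mem_mSpan ⟨ee (c i₀) (d i₀), ⟨i₀, rfl⟩,
          ee_le_iff.2 ⟨le_refl _, by have := hd hi₀last; omega⟩⟩
      have w2 : monomial (ee (c i₀ - 1) (d (Fin.last s) - 1 + 1)) (1:k) ∈ J := by
        have he : d (Fin.last s) - 1 + 1 = d (Fin.last s) := by omega
        rw [he, hJ']
        exact monomial_mem_mSpan ⟨ee (c (Fin.last s)) (d (Fin.last s)), ⟨Fin.last s, rfl⟩,
          ee_le_iff.2 ⟨by rw [hcs]; omega, le_refl _⟩⟩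
      have hnot := lb hJ' w0 w1 w2
      have hgt : ¬ (omegaAbs J ≤ (c i₀ - 1) + (d (Fin.last s) - 1)) := by
        intro hle
        exact hnot (isNAbsorbing_iff_msAbs.1 (isNAbsorbing_mono hu_abs hle))
      omega
  -- final assembly
  have hc0m : c 0 ≤ max (c 0) (d (Fin.last s)) := le_max_left _ _
  have hdsm : d (Fin.last s) ≤ max (c 0) (d (Fin.last s)) := le_max_right _ _
  have hfin : Mxy ^ (omegaAbs I + max (c 0) (d (Fin.last s))) ≤ I * J := by
    apply Mxy_pow_le
    intro p q hpq
    by_cases hp : c 0 ≤ p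
    · have hmm : monomial (ee p q) (1:k)
          = monomial (ee (p - c 0) q) 1 * monomial (ee (c 0) 0) 1 := by
        rw [monomial_mul, one_mul, ee_add]
        have e1 : p - c 0 + c 0 = p := by omega
        rw [e1, add_zero]
      rw [hmm]
      exact Ideal.mul_mem_mul (hMt (monomial_mem_Mxy_pow (by omega))) monJ0
    · have hq : d (Fin.last s) ≤ q := by omega
      have hmm : monomial (ee p q) (1:k)
          = monomial (ee p (q - d (Fin.last s))) 1 * monomial (ee 0 (d (Fin.last s))) 1 := by
        rw [monomial_mul, one_mul, ee_add]
        have e1 : q - d (Fin.last s) + d (Fin.last s) = q := by omega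
        rw [e1, add_zero]
      rw [hmm]
      exact Ideal.mul_mem_mul (hMt (monomial_mem_Mxy_pow (by omega))) monJs
  have habsIJ : IsNAbsorbing (I * J) (omegaAbs I + max (c 0) (d (Fin.last s))) :=
    ub hIJ hfin
  exact Nat.sInf_le habsIJ
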